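/- Generating function identities on the comb: for simple random walk on the comb lattice C₂, the Green generating function satisfies G(o,o|z) = √2 / √(1 - z² + √(1-z²)) for 0 < z < 1, and G((x₁,x₂), o | z) = F₁(z)^{|x₂|} F₂(z)^{|x₁|} G(o,o|z), where F₁(z) = (1 - √(1-z²))/z and F₂(z) = (1 + √(1-z²) - √2·√(1-z² + √(1-z²)))/z. -/

import Mathlib

/-- Neighbours of a vertex of the comb lattice `C₂`: vertical neighbours everywhere,
plus horizontal neighbours along the backbone `y = 0`. -/
def combNbrs (p : ℤ × ℤ) : Finset (ℤ × ℤ) :=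
  if p.2 = 0 then {(p.1 + 1, 0), (p.1 - 1, 0), (p.1, 1), (p.1, -1)}
  else {(p.1, p.2 + 1), (p.1, p.2 - 1)}

/-- `t`-step transition probabilities `P_x[X_t = y]` of simple random walk on the comb. -/
noncomputable def combProb : ℕ → ℤ × ℤ → ℤ × ℤ → ℝ
  | 0, x, y => if x = y then 1 else 0
  | t + 1, x, y => (1 / ((combNbrs x).card : ℝ)) * ∑ w ∈ combNbrs x, combProb t w y

/-- The Green generating function `G(x,y|z) = ∑_{t≥0} P_x[X_t = y] zᵗ`. -/
noncomputable def combGreenGF (x y : ℤ × ℤ) (z : ℝ) : ℝ :=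
  ∑' t : ℕ, combProb t x y * z ^ t

/-- `F₁(z) = (1 - √(1-z²))/z`. -/
noncomputable def F1 (z : ℝ) : ℝ := (1 - Real.sqrt (1 - z ^ 2)) / z

/-- `F₂(z) = (1 + √(1-z²) - √2·√(1-z² + √(1-z²)))/z`. -/
noncomputable def F2 (z : ℝ) : ℝ :=
  (1 + Real.sqrt (1 - z ^ 2) - Real.sqrt 2 * Real.sqrt (1 - z ^ 2 + Real.sqrt (1 - z ^ 2))) / z

noncomputable def combC (z : ℝ) : ℝ :=
  Real.sqrt 2 / Real.sqrt (1 - z ^ 2 + Real.sqrt (1 - z ^ 2))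

noncomputable def gcand (z : ℝ) (x : ℤ × ℤ) : ℝ :=
  F1 z ^ x.2.natAbs * F2 z ^ x.1.natAbs * combC z

lemma sum_nbrs0 (f : ℤ × ℤ → ℝ) (a : ℤ) :
    ∑ w ∈ combNbrs (a, 0), f w = f (a+1, 0) + f (a-1, 0) + f (a, 1) + f (a, -1) := by
  show ∑ w ∈ ({(a + 1, 0), (a - 1, 0), (a, 1), (a, -1)} : Finset (ℤ × ℤ)), f w = _
  rw [Finset.sum_insert (by simp [Prod.ext_iff]; try omega),
      Finset.sum_insert (by simp [Prod.ext_iff]; try omega),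
      Finset.sum_insert (by simp [Prod.ext_iff]),
      Finset.sum_singleton]
  ring

lemma sum_nbrs1 (f : ℤ × ℤ → ℝ) (a b : ℤ) (hb : b ≠ 0) :
    ∑ w ∈ combNbrs (a, b), f w = f (a, b+1) + f (a, b-1) := by
  show ∑ w ∈ (if b = 0 then _ else {(a, b + 1), (a, b - 1)} : Finset (ℤ × ℤ)), f w = _
  rw [if_neg hb, Finset.sum_insert (by simp [Prod.ext_iff]; try omega), Finset.sum_singleton]

lemma card_nbrs0 (a : ℤ) : (combNbrs (a, 0)).card = 4 := by
  show ({(a + 1, 0), (a - 1, 0), (a, 1), (a, -1)} : Finset (ℤ × ℤ)).card = 4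
  rw [Finset.card_insert_of_notMem (by simp [Prod.ext_iff]; try omega),
      Finset.card_insert_of_notMem (by simp [Prod.ext_iff]; try omega),
      Finset.card_insert_of_notMem (by simp [Prod.ext_iff]),
      Finset.card_singleton]

lemma card_nbrs1 (a b : ℤ) (hb : b ≠ 0) : (combNbrs (a, b)).card = 2 := by
  show (if b = 0 then _ else {(a, b + 1), (a, b - 1)} : Finset (ℤ × ℤ)).card = 2
  rw [if_neg hb, Finset.card_insert_of_notMem (by simp [Prod.ext_iff]; try omega),
      Finset.card_singleton]

lemma card_nbrs_pos (p : ℤ × ℤ) : 0 < (combNbrs p).card := by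
  obtain ⟨a, b⟩ := p
  rcases eq_or_ne b 0 with h | h
  · subst h; rw [card_nbrs0]; norm_num
  · rw [card_nbrs1 a b h]; norm_num

lemma combProb_nonneg (t : ℕ) (x y : ℤ × ℤ) : 0 ≤ combProb t x y := by
  induction t generalizing x with
  | zero => simp only [combProb]; positivity
  | succ t ih =>
      simp only [combProb]
      apply mul_nonneg (by positivity)
      exact Finset.sum_nonneg fun w _ => ih w

lemma combProb_le_one (t : ℕ) (x y : ℤ × ℤ) : combProb t x y ≤ 1 := by
  induction t generalizing x with
  | zero => simp only [combProb]; split <;> norm_num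
  | succ t ih =>
      simp only [combProb]
      have hc : (0 : ℝ) < ((combNbrs x).card : ℝ) := by
        exact_mod_cast card_nbrs_pos x
      rw [div_mul_eq_mul_div, one_mul, div_le_one hc]
      calc ∑ w ∈ combNbrs x, combProb t w y ≤ ∑ w ∈ combNbrs x, 1 :=
            Finset.sum_le_sum fun w _ => ih w
        _ = ((combNbrs x).card : ℝ) := by simp

lemma summable_green (x y : ℤ × ℤ) {z : ℝ} (hz0 : 0 < z) (hz1 : z < 1) :
    Summable (fun t : ℕ => combProb t x y * z ^ t) := by
  apply Summable.of_nonneg_of_le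
    (fun t => mul_nonneg (combProb_nonneg t x y) (by positivity))
    (fun t => ?_) (summable_geometric_of_lt_one hz0.le hz1)
  calc combProb t x y * z ^ t ≤ 1 * z ^ t := by
        apply mul_le_mul_of_nonneg_right (combProb_le_one t x y) (by positivity)
    _ = z ^ t := one_mul _

/-- The Green function satisfies the one-step recurrence. -/
lemma green_rec (x y : ℤ × ℤ) {z : ℝ} (hz0 : 0 < z) (hz1 : z < 1) :
    combGreenGF x y z = (if x = y then 1 else 0)
      + z * ((1 / ((combNbrs x).card : ℝ)) * ∑ w ∈ combNbrs x, combGreenGF w y z) := by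
  have hsum : ∀ w : ℤ × ℤ, Summable (fun t : ℕ => combProb t w y * z ^ t) :=
    fun w => summable_green w y hz0 hz1
  have h1 : combGreenGF x y z
      = combProb 0 x y * z ^ 0 + ∑' t : ℕ, combProb (t+1) x y * z ^ (t+1) :=
    Summable.tsum_eq_zero_add (summable_green x y hz0 hz1)
  rw [h1]
  have h2 : ∀ t : ℕ, combProb (t+1) x y * z ^ (t+1)
      = z * ∑ w ∈ combNbrs x, (1 / ((combNbrs x).card : ℝ)) * (combProb t w y * z ^ t) := by
    intro t
    simp only [combProb, Finset.mul_sum, Finset.sum_mul]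
    exact Finset.sum_congr rfl (fun w _ => by ring)
  simp only [h2]
  rw [tsum_mul_left, Summable.tsum_finsetSum (fun w _ => (hsum w).mul_left _)]
  have h3 : ∀ w ∈ combNbrs x, ∑' t : ℕ, (1 / ((combNbrs x).card : ℝ)) * (combProb t w y * z ^ t)
      = (1 / ((combNbrs x).card : ℝ)) * combGreenGF w y z := by
    intro w _
    rw [tsum_mul_left]; rfl
  rw [Finset.sum_congr rfl h3, ← Finset.mul_sum]
  simp [combProb]

section algebra
variable {z : ℝ} (hz0 : 0 < z) (hz1 : z < 1)
include hz0 hz1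

lemma s_pos : 0 < Real.sqrt (1 - z ^ 2) :=
  Real.sqrt_pos.2 (by nlinarith)

lemma s_sq : Real.sqrt (1 - z ^ 2) ^ 2 = 1 - z ^ 2 :=
  Real.sq_sqrt (by nlinarith)

lemma s_lt_one : Real.sqrt (1 - z ^ 2) < 1 := by
  nlinarith [s_sq hz0 hz1, Real.sqrt_nonneg (1 - z ^ 2)]

lemma B_sq : (Real.sqrt 2 * Real.sqrt (1 - z ^ 2 + Real.sqrt (1 - z ^ 2))) ^ 2
    = 2 * (1 - z ^ 2) + 2 * Real.sqrt (1 - z ^ 2) := by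
  have h1 : (0:ℝ) ≤ 1 - z ^ 2 := by nlinarith
  have h2 : (0:ℝ) ≤ Real.sqrt (1 - z ^ 2) := Real.sqrt_nonneg _
  rw [mul_pow, Real.sq_sqrt (by norm_num : (0:ℝ) ≤ 2), Real.sq_sqrt (by linarith)]
  ring

/-- quadratic for F1 : z F1² - 2 F1 + z = 0 -/
lemma F1_quad : z * F1 z ^ 2 - 2 * F1 z + z = 0 := by
  have hs := s_sq hz0 hz1
  rw [F1]
  field_simp
  nlinarith [hs]

/-- quadratic for F2 : z F2² + 2 z F1 F2 - 4 F2 + z = 0 -/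
lemma F2_quad : z * F2 z ^ 2 + 2 * z * F1 z * F2 z - 4 * F2 z + z = 0 := by
  have hs := s_sq hz0 hz1
  have hB := B_sq hz0 hz1
  rw [F1, F2]
  field_simp
  linear_combination hB - hs

/-- normalization : C (1 - z (F1 + F2)/2) = 1 -/
lemma C_eq : combC z * (1 - z * (F1 z + F2 z) / 2) = 1 := by
  have hs := s_pos hz0 hz1
  have hA : 0 < Real.sqrt (1 - z ^ 2 + Real.sqrt (1 - z ^ 2)) := by
    apply Real.sqrt_pos.2; nlinarith [s_sq hz0 hz1]
  have h2 : (0:ℝ) < Real.sqrt 2 := by positivity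
  rw [combC, F1, F2]
  field_simp
  linear_combination Real.sqrt (1 - z ^ 2 + Real.sqrt (1 - z ^ 2)) *
    Real.mul_self_sqrt (by norm_num : (0:ℝ) ≤ 2)

lemma F1_pos : 0 < F1 z := by
  have := s_lt_one hz0 hz1
  exact div_pos (by linarith) hz0

lemma F1_lt_one : F1 z < 1 := by
  have hs := s_sq hz0 hz1
  have h2 : 1 - z < Real.sqrt (1 - z ^ 2) := by
    nlinarith [s_pos hz0 hz1, Real.sqrt_nonneg (1 - z^2)]
  rw [F1, div_lt_one hz0]; linarith

lemma F2_pos : 0 < F2 z := by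
  have hs := s_pos hz0 hz1
  have hs1 := s_lt_one hz0 hz1
  have hB := B_sq hz0 hz1
  have hBpos : 0 < Real.sqrt 2 * Real.sqrt (1 - z ^ 2 + Real.sqrt (1 - z ^ 2)) := by
    apply mul_pos (by positivity)
    apply Real.sqrt_pos.2; nlinarith [s_sq hz0 hz1]
  apply div_pos _ hz0
  nlinarith [s_sq hz0 hz1]

lemma F2_lt_one : F2 z < 1 := by
  have hs := s_sq hz0 hz1
  have hsp := s_pos hz0 hz1
  have hs1 := s_lt_one hz0 hz1
  have hB := B_sq hz0 hz1
  have hBpos : 0 < Real.sqrt 2 * Real.sqrt (1 - z ^ 2 + Real.sqrt (1 - z ^ 2)) := by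
    apply mul_pos (by positivity)
    apply Real.sqrt_pos.2; nlinarith
  rw [F2, div_lt_one hz0]
  -- need 1 + s - B < z, i.e. 1 + s - z < B ; both sides pos, square
  nlinarith [sq_nonneg (1 + Real.sqrt (1 - z^2) - z
      - Real.sqrt 2 * Real.sqrt (1 - z ^ 2 + Real.sqrt (1 - z ^ 2)))]

lemma C_pos : 0 < combC z := by
  apply div_pos (by positivity)
  apply Real.sqrt_pos.2; nlinarith [s_sq hz0 hz1, s_pos hz0 hz1]

end algebra


section main
variable {z : ℝ} (hz0 : 0 < z) (hz1 : z < 1)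

include hz0 hz1 in
lemma gcand_rec (x : ℤ × ℤ) :
    gcand z x = (if x = ((0 : ℤ), (0 : ℤ)) then 1 else 0)
      + z * ((1 / ((combNbrs x).card : ℝ)) * ∑ w ∈ combNbrs x, gcand z w) := by
  obtain ⟨a, b⟩ := x
  rcases eq_or_ne b 0 with hb | hb
  · subst hb
    rw [sum_nbrs0 (gcand z) a, card_nbrs0 a]
    rcases lt_trichotomy a 0 with ha | ha | ha
    · obtain ⟨m, hm⟩ : ∃ m, a.natAbs = m + 1 := ⟨a.natAbs - 1, by omega⟩
      rw [if_neg (by simp [Prod.ext_iff]; omega)]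
      simp only [gcand]
      rw [show ((a : ℤ) + 1).natAbs = m from by omega,
          show ((a : ℤ) - 1).natAbs = m + 2 from by omega, hm]
      push_cast
      simp only [Int.natAbs_zero, Int.natAbs_one, pow_zero, pow_one, one_mul]
      linear_combination (-(F2 z ^ m * combC z) / 4) * F2_quad hz0 hz1
    · subst ha
      rw [if_pos rfl]
      simp only [gcand]
      norm_num
      linear_combination C_eq hz0 hz1
    · obtain ⟨m, hm⟩ : ∃ m, a.natAbs = m + 1 := ⟨a.natAbs - 1, by omega⟩
      rw [if_neg (by simp [Prod.ext_iff]; omega)]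
      simp only [gcand]
      rw [show ((a : ℤ) + 1).natAbs = m + 2 from by omega,
          show ((a : ℤ) - 1).natAbs = m from by omega, hm]
      push_cast
      simp only [Int.natAbs_zero, Int.natAbs_one, pow_zero, pow_one, one_mul]
      linear_combination (-(F2 z ^ m * combC z) / 4) * F2_quad hz0 hz1
  · rw [sum_nbrs1 (gcand z) a b hb, card_nbrs1 a b hb,
        if_neg (by simp [Prod.ext_iff]; omega)]
    simp only [gcand]
    obtain ⟨m, hm⟩ : ∃ m, b.natAbs = m + 1 := ⟨b.natAbs - 1, by omega⟩
    rcases lt_or_gt_of_ne hb with hb' | hb'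
    · rw [show ((b : ℤ) + 1).natAbs = m from by omega,
          show ((b : ℤ) - 1).natAbs = m + 2 from by omega, hm]
      push_cast
      linear_combination (-(F1 z ^ m * F2 z ^ a.natAbs * combC z) / 2) * F1_quad hz0 hz1
    · rw [show ((b : ℤ) + 1).natAbs = m + 2 from by omega,
          show ((b : ℤ) - 1).natAbs = m from by omega, hm]
      push_cast
      linear_combination (-(F1 z ^ m * F2 z ^ a.natAbs * combC z) / 2) * F1_quad hz0 hz1


include hz0 hz1 in
/-- Uniqueness of bounded solutions: if `h = zPh` and `h` is bounded, `h = 0`. -/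
lemma contraction (h : ℤ × ℤ → ℝ) (M : ℝ)
    (hrec : ∀ x, h x = z * ((1 / ((combNbrs x).card : ℝ)) * ∑ w ∈ combNbrs x, h w))
    (hM : ∀ x, |h x| ≤ M) : ∀ x, h x = 0 := by
  have key : ∀ n : ℕ, ∀ x, |h x| ≤ z ^ n * M := by
    intro n
    induction n with
    | zero => simpa using hM
    | succ n ih =>
        intro x
        have hc : (0 : ℝ) < ((combNbrs x).card : ℝ) := by exact_mod_cast card_nbrs_pos x
        have h1 : |∑ w ∈ combNbrs x, h w| ≤ ((combNbrs x).card : ℝ) * (z ^ n * M) := by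
          calc |∑ w ∈ combNbrs x, h w| ≤ ∑ w ∈ combNbrs x, |h w| :=
                Finset.abs_sum_le_sum_abs _ _
            _ ≤ ∑ w ∈ combNbrs x, z ^ n * M := Finset.sum_le_sum fun w _ => ih w
            _ = ((combNbrs x).card : ℝ) * (z ^ n * M) := by
                rw [Finset.sum_const, nsmul_eq_mul]
        rw [hrec x, abs_mul, abs_mul, abs_of_pos hz0, abs_of_pos (one_div_pos.2 hc)]
        calc z * (1 / ((combNbrs x).card : ℝ) * |∑ w ∈ combNbrs x, h w|)
            ≤ z * (1 / ((combNbrs x).card : ℝ) * (((combNbrs x).card : ℝ) * (z ^ n * M))) := by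
              apply mul_le_mul_of_nonneg_left _ hz0.le
              exact mul_le_mul_of_nonneg_left h1 (one_div_pos.2 hc).le
          _ = z ^ (n + 1) * M := by
              rw [← mul_assoc (1 / ((combNbrs x).card : ℝ)), one_div_mul_cancel hc.ne', one_mul]; ring
  intro x
  have hM0 : 0 ≤ M := le_trans (abs_nonneg _) (hM x)
  have htend : Filter.Tendsto (fun n : ℕ => z ^ n * M) Filter.atTop (nhds 0) := by
    have := (tendsto_pow_atTop_nhds_zero_of_lt_one hz0.le hz1).mul_const M
    simpa using this
  have : |h x| ≤ 0 := ge_of_tendsto' htend fun n => key n x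
  exact abs_eq_zero.1 (le_antisymm this (abs_nonneg _))


include hz0 hz1 in
lemma green_le (x : ℤ × ℤ) : combGreenGF x (0, 0) z ≤ (1 - z)⁻¹ := by
  rw [combGreenGF, ← tsum_geometric_of_lt_one hz0.le hz1]
  apply Summable.tsum_le_tsum _ (summable_green x _ hz0 hz1) (summable_geometric_of_lt_one hz0.le hz1)
  intro t
  calc combProb t x (0, 0) * z ^ t ≤ 1 * z ^ t :=
        mul_le_mul_of_nonneg_right (combProb_le_one t x _) (by positivity)
    _ = z ^ t := one_mul _

include hz0 in
lemma green_nonneg (x : ℤ × ℤ) : 0 ≤ combGreenGF x (0, 0) z :=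
  tsum_nonneg fun t => mul_nonneg (combProb_nonneg t x _) (pow_nonneg hz0.le t)

include hz0 hz1 in
lemma gcand_bound (x : ℤ × ℤ) : |gcand z x| ≤ combC z := by
  have h1 := F1_pos hz0 hz1
  have h2 := F1_lt_one hz0 hz1
  have h3 := F2_pos hz0 hz1
  have h4 := F2_lt_one hz0 hz1
  have hC := C_pos hz0 hz1
  rw [gcand, abs_of_pos (by positivity)]
  calc F1 z ^ x.2.natAbs * F2 z ^ x.1.natAbs * combC z
      ≤ 1 * 1 * combC z := by
        apply mul_le_mul_of_nonneg_right _ hC.le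
        exact mul_le_mul (pow_le_one₀ h1.le h2.le) (pow_le_one₀ h3.le h4.le)
          (by positivity) zero_le_one
    _ = combC z := by ring

include hz0 hz1 in
lemma green_eq_gcand (x : ℤ × ℤ) : combGreenGF x (0, 0) z = gcand z x := by
  have key := contraction hz0 hz1 (fun x => combGreenGF x (0, 0) z - gcand z x)
    ((1 - z)⁻¹ + combC z) ?_ ?_ x
  · linarith [key]
  · intro x
    have h1 := green_rec x (0, 0) hz0 hz1
    have h2 := gcand_rec hz0 hz1 x
    rw [Finset.sum_sub_distrib]
    have : (if x = ((0:ℤ), (0:ℤ)) then (1:ℝ) else 0) = (if x = ((0:ℤ), (0:ℤ)) then (1:ℝ) else 0) := rfl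
    rw [mul_sub, mul_sub]
    linarith [h1, h2]
  · intro x
    have h1 := green_le hz0 hz1 x
    have h2 := green_nonneg hz0 x
    have h3 := gcand_bound hz0 hz1 x
    have h4 := abs_nonneg (gcand z x)
    rw [abs_sub_le_iff]
    constructor
    · have := neg_abs_le (gcand z x)
      linarith
    · have := le_abs_self (gcand z x)
      linarith

end main

/-- Generating function identities for simple random walk on the comb `C₂`:
`G(o,o|z) = √2/√(1-z²+√(1-z²))` and
`G((x₁,x₂),o|z) = F₁(z)^{|x₂|}·F₂(z)^{|x₁|}·G(o,o|z)` for `0 < z < 1`. -/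
theorem comb_green_generating_function (z : ℝ) (hz0 : 0 < z) (hz1 : z < 1) :
    combGreenGF (0, 0) (0, 0) z
        = Real.sqrt 2 / Real.sqrt (1 - z ^ 2 + Real.sqrt (1 - z ^ 2)) ∧
    ∀ x : ℤ × ℤ, combGreenGF x (0, 0) z
        = F1 z ^ x.2.natAbs * F2 z ^ x.1.natAbs * combGreenGF (0, 0) (0, 0) z := by
  have h0 : combGreenGF (0, 0) (0, 0) z = combC z := by
    rw [green_eq_gcand hz0 hz1 (0, 0)]
    simp [gcand, combC]
  refine ⟨h0, fun x => ?_⟩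
  rw [green_eq_gcand hz0 hz1 x, h0, gcand]
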